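/- The specialist aggregation algorithm with prior π achieves, for every specialist i ∈ {1,…,M} and every T ≥ 1, the bound Σ_{t ≤ T : i ∈ A_t} (ℓ_t − ℓ_{i,t}) ≤ (1/η) · log(1/π_i). -/

import Mathlib

private lemma sum_equivFin' {α : Type*} {β : Type*} [AddCommMonoid β]
    (s : Finset α) (f : α → β) :
    ∑ k : Fin s.card, f ((s.equivFin.symm k : s) : α) = ∑ j ∈ s, f j := by
  rw [← Finset.sum_coe_sort s f]
  exact Equiv.sum_comp s.equivFin.symm (fun j => f (j : α))

/-- **Specialist aggregation regret bound (Proposition 2, first part).**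
The specialist aggregation algorithm with prior π achieves, for every specialist i
and every T ≥ 1, the bound Σ_{t ≤ T : i ∈ A_t} (ℓ_t − ℓ_{i,t}) ≤ (1/η)·log(1/π_i). -/
theorem specialist_aggregation_regret
    {E : Type*} [AddCommGroup E] [Module ℝ E] {Y : Type*}
    (X : Set E) (ℓ : E → Y → ℝ) (η : ℝ) (hη : 0 < η)
    (hexp : ∀ (yy : Y) (N : ℕ), 1 ≤ N → ∀ xs : Fin N → E, (∀ i, xs i ∈ X) →
      ∀ vv : Fin N → ℝ, (∀ i, 0 ≤ vv i) → (∑ i, vv i) = 1 →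
      ℓ (∑ i, vv i • xs i) yy ≤ -(1/η) * Real.log (∑ i, vv i * Real.exp (-η * ℓ (xs i) yy)))
    (M : ℕ) (hM : 1 ≤ M)
    (π : Fin M → ℝ) (hπpos : ∀ i, 0 < π i) (hπsum : ∑ i, π i = 1)
    (A : ℕ → Finset (Fin M)) (hA : ∀ t, 1 ≤ t → (A t).Nonempty)
    (xe : Fin M → ℕ → E) (hxe : ∀ i t, 1 ≤ t → i ∈ A t → xe i t ∈ X)
    (y : ℕ → Y) (xl : ℕ → E)
    (Lc : Fin M → ℕ → ℝ)
    -- completed cumulative losses L_{i,t} = Σ_{s ≤ t : i ∈ A_s} ℓ_{i,s} + Σ_{s ≤ t : i ∉ A_s} ℓ_s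
    (hLc : ∀ i t, Lc i t = ∑ s ∈ Finset.Icc 1 t,
      (if i ∈ A s then ℓ (xe i s) (y s) else ℓ (xl s) (y s)))
    -- the learner aggregates the active specialists with weights w_{i,t} = π_i exp(−η L_{i,t−1})
    (hxl : ∀ t, 1 ≤ t → xl t =
      (∑ i ∈ A t, π i * Real.exp (-η * Lc i (t-1)))⁻¹ •
        ∑ i ∈ A t, (π i * Real.exp (-η * Lc i (t-1))) • xe i t) :
    ∀ T : ℕ, 1 ≤ T → ∀ i : Fin M,
      ∑ t ∈ (Finset.Icc 1 T).filter (fun t => i ∈ A t),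
          (ℓ (xl t) (y t) - ℓ (xe i t) (y t))
        ≤ (1/η) * Real.log (1 / π i) := by
  set Λ : ℕ → ℝ := fun t => ∑ s ∈ Finset.Icc 1 t, ℓ (xl s) (y s) with hΛ
  set F : Fin M → ℕ → ℝ := fun j t => π j * Real.exp (-η * (Lc j t - Λ t)) with hFdef
  have hFpos : ∀ j t, 0 < F j t := fun j t => mul_pos (hπpos j) (Real.exp_pos _)
  have hΦ : ∀ t, ∑ j, F j t ≤ 1 := by
    intro t
    induction t with
    | zero =>
      have h0 : ∀ j, F j 0 = π j := by
        intro j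
        simp [hFdef, hLc, hΛ]
      simp only [h0]
      exact le_of_eq hπsum
    | succ n ih =>
      set t := n + 1 with htdef
      have ht : 1 ≤ t := Nat.le_add_left 1 n
      set lt := ℓ (xl t) (y t) with hlt
      set s := A t with hs
      have hsne := hA t ht
      set w : Fin M → ℝ := fun j => π j * Real.exp (-η * Lc j n) with hw
      have hwpos : ∀ j, 0 < w j := fun j => mul_pos (hπpos j) (Real.exp_pos _)
      set S := ∑ j ∈ s, w j with hS
      have hSpos : 0 < S := Finset.sum_pos (fun j _ => hwpos j) hsne
      -- key inequality from exp-concavity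
      have hkey : ∑ j ∈ s, w j * Real.exp (-η * ℓ (xe j t) (y t))
          ≤ Real.exp (-η * lt) * S := by
        set N := s.card with hN
        have hN1 : 1 ≤ N := Finset.card_pos.mpr hsne
        set e := s.equivFin with he
        set xs : Fin N → E := fun k => xe ((e.symm k : s) : Fin M) t with hxs
        set vv : Fin N → ℝ := fun k => w ((e.symm k : s) : Fin M) / S with hvv
        have hxsX : ∀ k, xs k ∈ X := fun k => hxe _ t ht (e.symm k).2
        have hvv0 : ∀ k, 0 ≤ vv k := fun k => le_of_lt (div_pos (hwpos _) hSpos)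
        have hvvsum : ∑ k, vv k = 1 := by
          simp only [hvv, ← Finset.sum_div]
          rw [sum_equivFin' s w, ← hS, div_self hSpos.ne']
        have hxlt : xl t = ∑ k, vv k • xs k := by
          rw [hxl t ht]
          have hterm : ∀ k, vv k • xs k = S⁻¹ • (w ((e.symm k : s) : Fin M) • xs k) := by
            intro k
            rw [smul_smul, hvv]
            congr 1
            field_simp
          rw [Finset.sum_congr rfl (fun k _ => hterm k), ← Finset.smul_sum]
          have : ∑ k, w ((e.symm k : s) : Fin M) • xs k
              = ∑ j ∈ s, w j • xe j t := by
            exact sum_equivFin' s (fun j => w j • xe j t)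
          rw [this]
          simp only [htdef, Nat.add_sub_cancel]
          rfl
        have hE := hexp (y t) N hN1 xs hxsX vv hvv0 hvvsum
        rw [← hxlt] at hE
        set Z := ∑ k, vv k * Real.exp (-η * ℓ (xs k) (y t)) with hZ
        have hZeq : Z = S⁻¹ * ∑ j ∈ s, w j * Real.exp (-η * ℓ (xe j t) (y t)) := by
          rw [hZ, Finset.mul_sum]
          have := sum_equivFin' s (fun j => S⁻¹ * (w j * Real.exp (-η * ℓ (xe j t) (y t))))
          rw [← this]
          apply Finset.sum_congr rfl
          intro k _
          simp only [hvv, hxs]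
          field_simp
          rfl
        have hZpos : 0 < Z := by
          rw [hZeq]
          exact mul_pos (inv_pos.mpr hSpos)
            (Finset.sum_pos (fun j _ => mul_pos (hwpos j) (Real.exp_pos _)) hsne)
        have hlog : Real.log Z ≤ -η * lt := by
          have h1 : η * lt ≤ η * (-(1/η) * Real.log Z) :=
            mul_le_mul_of_nonneg_left hE hη.le
          have h2 : η * (-(1/η) * Real.log Z) = - Real.log Z := by
            field_simp
          linarith
        have hZle : Z ≤ Real.exp (-η * lt) := by
          have := Real.exp_le_exp.mpr hlog
          rwa [Real.exp_log hZpos] at this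
        have : ∑ j ∈ s, w j * Real.exp (-η * ℓ (xe j t) (y t)) = S * Z := by
          rw [hZeq]; field_simp
        rw [this]
        calc S * Z ≤ S * Real.exp (-η * lt) := by
              exact mul_le_mul_of_nonneg_left hZle hSpos.le
          _ = Real.exp (-η * lt) * S := by ring
      -- evolution of Lc and Λ
      have hLs : ∀ j, Lc j t = Lc j n + (if j ∈ s then ℓ (xe j t) (y t) else lt) := by
        intro j
        rw [hLc, hLc, htdef, Finset.sum_Icc_succ_top (Nat.le_add_left 1 n)]
      have hΛs : Λ t = Λ n + lt := by
        simp only [hΛ, htdef]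
        rw [Finset.sum_Icc_succ_top (Nat.le_add_left 1 n)]
      have hFw : ∀ j, F j n = w j * Real.exp (η * Λ n) := by
        intro j
        simp only [hFdef, hw]
        rw [mul_assoc, ← Real.exp_add]
        congr 1
        ring
      have hFout : ∀ j, j ∉ s → F j t = F j n := by
        intro j hj
        simp only [hFdef, hLs j, hΛs, if_neg hj]
        have : Lc j n + lt - (Λ n + lt) = Lc j n - Λ n := by ring
        rw [this]
      have hFin : ∀ j ∈ s, F j t
          = Real.exp (η * Λ n) * Real.exp (η * lt)
            * (w j * Real.exp (-η * ℓ (xe j t) (y t))) := by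
        intro j hj
        simp only [hFdef, hLs j, hΛs, if_pos hj, hw]
        have h : -η * (Lc j n + ℓ (xe j t) (y t) - (Λ n + lt))
            = η * Λ n + η * lt + (-η * Lc j n + -η * ℓ (xe j t) (y t)) := by ring
        rw [h, Real.exp_add, Real.exp_add, Real.exp_add]
        ring
      have hstep : ∑ j, F j t ≤ ∑ j, F j n := by
        rw [← Finset.sum_add_sum_compl s (fun j => F j t),
          ← Finset.sum_add_sum_compl s (fun j => F j n)]
        have h2 : ∑ j ∈ sᶜ, F j t = ∑ j ∈ sᶜ, F j n :=
          Finset.sum_congr rfl (fun j hj => hFout j (Finset.mem_compl.mp hj))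
        rw [h2]
        refine add_le_add ?_ le_rfl
        calc ∑ j ∈ s, F j t
            = Real.exp (η * Λ n) * Real.exp (η * lt)
              * ∑ j ∈ s, w j * Real.exp (-η * ℓ (xe j t) (y t)) := by
              rw [Finset.mul_sum]
              exact Finset.sum_congr rfl hFin
          _ ≤ Real.exp (η * Λ n) * Real.exp (η * lt) * (Real.exp (-η * lt) * S) := by
              exact mul_le_mul_of_nonneg_left hkey
                (mul_pos (Real.exp_pos _) (Real.exp_pos _)).le
          _ = Real.exp (η * Λ n) * S := by
              rw [← mul_assoc, mul_assoc _ (Real.exp (η * lt)), ← Real.exp_add]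
              simp
          _ = ∑ j ∈ s, F j n := by
              rw [hS, Finset.mul_sum]
              exact Finset.sum_congr rfl (fun j _ => by rw [hFw j]; ring)
      exact hstep.trans ih
  intro T hT i
  have h1 : F i T ≤ 1 :=
    le_trans (Finset.single_le_sum (fun j _ => (hFpos j T).le) (Finset.mem_univ i)) (hΦ T)
  set R := Λ T - Lc i T with hR
  have hRsum : ∑ t ∈ (Finset.Icc 1 T).filter (fun t => i ∈ A t),
      (ℓ (xl t) (y t) - ℓ (xe i t) (y t)) = R := by
    rw [hR, hΛ, hLc, ← Finset.sum_sub_distrib, Finset.sum_filter]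
    apply Finset.sum_congr rfl
    intro t _
    by_cases h : i ∈ A t <;> simp [h]
  rw [hRsum]
  have hFi : F i T = π i * Real.exp (η * R) := by
    simp only [hFdef, hR]
    congr 1
    congr 1
    ring
  rw [hFi] at h1
  have hπi := hπpos i
  have hle : Real.exp (η * R) ≤ 1 / π i := by
    rw [le_div_iff₀ hπi]
    linarith [h1]
  have hlog : η * R ≤ Real.log (1 / π i) := by
    have := Real.log_le_log (Real.exp_pos _) hle
    rwa [Real.log_exp] at this

  have : R ≤ Real.log (1 / π i) / η := (le_div_iff₀ hη).mpr (by linarith [mul_comm η R])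
  linarith [this, (by ring : (1/η) * Real.log (1 / π i) = Real.log (1 / π i) / η)]
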